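/- Let Σ̂ ∈ ℝ^{m×m} be symmetric and Γ ∈ ℝ^{m×m}. Suppose that: (a) for every pair u ≠ v with Γ_{uv} ≠ 0, the stationarity condition 2 Σ̂_{uu} Γ_{uv} + A_{uv} = 0 holds; and (b) for every u, Γ_{uu} ≠ 0 and −2/Γ_{uu} + 2 Σ̂_{uu} Γ_{uu} + A_{uu} = 0. Then: (i) for every u ≠ v with Γ_{uv} ≠ 0, (Σ̂ Γ)_{uv} = 0; and (ii) every diagonal entry of the matrix Γ Γᵀ Σ̂ equals 1, i.e., (Γ Γᵀ Σ̂)_{ii} = 1 for all i. -/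

import Mathlib

open Matrix in
/-- Items (ii) and (iii) of Lemma 5: if `Γ` satisfies the coordinate-wise
stationarity conditions (a) `2 Σ̂ᵤᵤ Γᵤᵥ + Aᵤᵥ = 0` whenever `u ≠ v` and
`Γᵤᵥ ≠ 0`, and (b) `Γᵤᵤ ≠ 0` and `-2/Γᵤᵤ + 2 Σ̂ᵤᵤ Γᵤᵤ + Aᵤᵤ = 0` for all `u`,
then `(Σ̂ Γ)ᵤᵥ = 0` on the off-diagonal support of `Γ` and every diagonal entry
of `Γ Γᵀ Σ̂` equals `1`. Here
`A_{uv} = ∑_{j≠u} Γ_{jv} Σ̂_{ju} + ∑_{k≠u} Γ_{kv} Σ̂_{uk}`. -/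
theorem stmt_8 {m : ℕ} (Sig Γ : Matrix (Fin m) (Fin m) ℝ) (hsymm : Sig.IsSymm)
    (ha : ∀ u v : Fin m, u ≠ v → Γ u v ≠ 0 →
      2 * Sig u u * Γ u v +
        ((∑ j ∈ Finset.univ.filter (· ≠ u), Γ j v * Sig j u) +
          ∑ k ∈ Finset.univ.filter (· ≠ u), Γ k v * Sig u k) = 0)
    (hb : ∀ u : Fin m, Γ u u ≠ 0 ∧
      -2 / Γ u u + 2 * Sig u u * Γ u u +
        ((∑ j ∈ Finset.univ.filter (· ≠ u), Γ j u * Sig j u) +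
          ∑ k ∈ Finset.univ.filter (· ≠ u), Γ k u * Sig u k) = 0) :
    (∀ u v : Fin m, u ≠ v → Γ u v ≠ 0 → (Sig * Γ) u v = 0) ∧
    (∀ i : Fin m, (Γ * Γᵀ * Sig) i i = 1) := by
  have hS : ∀ i j, Sig j i = Sig i j := fun i j => hsymm.apply i j
  have key1 : ∀ u v : Fin m,
      ∑ j ∈ Finset.univ.filter (· ≠ u), Γ j v * Sig j u
        = (Sig * Γ) u v - Sig u u * Γ u v := by
    intro u v
    have h := Finset.sum_erase_add Finset.univ (fun j => Γ j v * Sig j u)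
      (Finset.mem_univ u)
    have hsum : ∑ j, Γ j v * Sig j u = (Sig * Γ) u v := by
      rw [Matrix.mul_apply]
      exact Finset.sum_congr rfl (fun j _ => by rw [hS u j, mul_comm])
    rw [Finset.filter_ne']
    rw [hsum] at h
    linarith [h, mul_comm (Γ u v) (Sig u u)]
  have key2 : ∀ u v : Fin m,
      ∑ k ∈ Finset.univ.filter (· ≠ u), Γ k v * Sig u k
        = (Sig * Γ) u v - Sig u u * Γ u v := by
    intro u v
    have h := Finset.sum_erase_add Finset.univ (fun k => Γ k v * Sig u k)
      (Finset.mem_univ u)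
    have hsum : ∑ k, Γ k v * Sig u k = (Sig * Γ) u v := by
      rw [Matrix.mul_apply]
      exact Finset.sum_congr rfl (fun j _ => by rw [mul_comm])
    rw [Finset.filter_ne']
    rw [hsum] at h
    linarith [h, mul_comm (Γ u v) (Sig u u)]
  have hoff : ∀ u v : Fin m, u ≠ v → Γ u v ≠ 0 → (Sig * Γ) u v = 0 := by
    intro u v huv hΓ
    have := ha u v huv hΓ
    rw [key1, key2] at this
    linarith
  have hdiag : ∀ u : Fin m, Γ u u * (Sig * Γ) u u = 1 := by
    intro u
    obtain ⟨hΓ, heq⟩ := hb u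
    rw [key1, key2] at heq
    have h2 : (Sig * Γ) u u = 1 / Γ u u := by
      field_simp at heq ⊢
      linarith
    rw [h2]
    field_simp
  refine ⟨hoff, fun i => ?_⟩
  have expand : (Γ * Γᵀ * Sig) i i = ∑ j, Γ i j * (Sig * Γ) i j := by
    rw [Matrix.mul_apply]
    simp only [Matrix.mul_apply, Matrix.transpose_apply, Finset.sum_mul]
    rw [Finset.sum_comm]
    refine Finset.sum_congr rfl (fun j _ => ?_)
    rw [Finset.mul_sum]
    refine Finset.sum_congr rfl (fun k _ => ?_)
    rw [hS i k]
    ring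
  rw [expand]
  rw [← Finset.sum_erase_add _ _ (Finset.mem_univ i)]
  have hzero : ∑ j ∈ Finset.univ.erase i, Γ i j * (Sig * Γ) i j = 0 := by
    refine Finset.sum_eq_zero (fun j hj => ?_)
    have hji : i ≠ j := fun h => (Finset.mem_erase.mp hj).1 h.symm
    by_cases hΓ : Γ i j = 0
    · rw [hΓ]; ring
    · rw [hoff i j hji hΓ]; ring
  rw [hzero, zero_add, hdiag i]
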